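/- The three elements z², f₁/(2(xy)^m) and −f₂/(2(xy)^m·z) of K are algebraically independent over ℂ. (This is the statable content of the local chart U_{m+2} ≅ Spec ℂ[z², f₁/(2x^m y^m), −f₂/(2x^m y^m z)] ≅ ℂ³ in Theorem 6.2(2) of the paper, describing the crepant resolutions of ℂ³/D₂ₙ for n odd.) -/

import Mathlib

open MvPolynomial

section Helpers

variable {K : Type*} [Field K] [Algebra ℂ K] {a b c : K}

lemma tri_swap01 (h : AlgebraicIndependent ℂ ![a, b, c]) :
    AlgebraicIndependent ℂ ![b, a, c] := by
  have h2 := h.comp ![1, 0, 2] (by decide)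
  convert h2 using 1
  funext i; fin_cases i <;> rfl

lemma tri_swap12 (h : AlgebraicIndependent ℂ ![a, b, c]) :
    AlgebraicIndependent ℂ ![a, c, b] := by
  have h2 := h.comp ![0, 2, 1] (by decide)
  convert h2 using 1
  funext i; fin_cases i <;> rfl

lemma tri_pair (h : AlgebraicIndependent ℂ ![a, b, c]) :
    AlgebraicIndependent ℂ ![a, b] := by
  have h2 := h.comp (![0, 1] : Fin 2 → Fin 3) (by decide)
  convert h2 using 1
  funext i; fin_cases i <;> rfl

lemma tri_iff (h2 : AlgebraicIndependent ℂ ![a, b]) (c : K) :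
    AlgebraicIndependent ℂ ![a, b, c] ↔
      Transcendental (Algebra.adjoin ℂ (Set.range ![a, b])) c := by
  rw [← h2.option_iff_transcendental c]
  refine algebraicIndependent_equiv' (finSuccEquivLast (n := 2)) ?_
  funext i
  fin_cases i <;> rfl

lemma tri_inv3 (h : AlgebraicIndependent ℂ ![a, b, c]) :
    AlgebraicIndependent ℂ ![a, b, c⁻¹] := by
  have h2 : AlgebraicIndependent ℂ ![a, b] := tri_pair h
  rw [tri_iff h2] at h ⊢
  rw [Transcendental, IsAlgebraic.inv_iff]
  exact h

lemma tri_inv (h : AlgebraicIndependent ℂ ![a, b, c]) :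
    AlgebraicIndependent ℂ ![a⁻¹, b, c] :=
  tri_swap01 (tri_swap12 (tri_inv3 (tri_swap12 (tri_swap01 h))))

lemma tri_pow (k : ℕ) (hk : 0 < k) (h : AlgebraicIndependent ℂ ![a, b, c]) :
    AlgebraicIndependent ℂ ![a ^ k, b, c] := by
  have h2 := h.polynomial_aeval_of_transcendental
    (f := ![Polynomial.X ^ k, Polynomial.X, Polynomial.X]) (by
      intro i
      fin_cases i
      · exact (Polynomial.transcendental_X ℂ).pow hk
      · exact Polynomial.transcendental_X ℂ
      · exact Polynomial.transcendental_X ℂ)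
  convert h2 using 1
  funext i; fin_cases i <;> simp

lemma tri_mul (k : ℕ) (h : AlgebraicIndependent ℂ ![a, b, c]) :
    AlgebraicIndependent ℂ ![a * b ^ k, b, c] := by
  have hb : b ≠ 0 := by simpa using h.ne_zero 1
  have hf : AlgebraicIndependent ℂ
      ![(X 0 : MvPolynomial (Fin 3) ℂ) * X 1 ^ k, X 1, X 2] := by
    apply AlgebraicIndependent.of_aeval (x := ![a * (b⁻¹) ^ k, b, c])
    convert h using 1
    funext i
    fin_cases i <;> simp <;> field_simp
  have h2 := h.aeval_of_algebraicIndependent hf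
  convert h2 using 1
  funext i; fin_cases i <;> simp

end Helpers

theorem chart_U_m_plus_two_dihedral_odd (K : Type*) [Field K] [Algebra ℂ K]
    [Algebra (MvPolynomial (Fin 3) ℂ) K]
    [IsScalarTower ℂ (MvPolynomial (Fin 3) ℂ) K]
    [IsFractionRing (MvPolynomial (Fin 3) ℂ) K]
    (m : ℕ) (hm : 1 ≤ m) (n : ℕ) (hn : n = 2 * m + 1)
    (x y z : K)
    (hx : x = algebraMap (MvPolynomial (Fin 3) ℂ) K (X 0))
    (hy : y = algebraMap (MvPolynomial (Fin 3) ℂ) K (X 1))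
    (hz : z = algebraMap (MvPolynomial (Fin 3) ℂ) K (X 2))
    (f₁ f₂ : K) (hf₁ : f₁ = x ^ n + y ^ n) (hf₂ : f₂ = x ^ n - y ^ n) :
    AlgebraicIndependent ℂ
      ![z ^ 2, f₁ / (2 * x ^ m * y ^ m), -f₂ / (2 * x ^ m * y ^ m * z)] := by
  subst hf₁ hf₂ hn
  haveI : CharZero K := charZero_of_injective_algebraMap (algebraMap ℂ K).injective
  have h0 : AlgebraicIndependent ℂ ![x, y, z] := by
    have h := (MvPolynomial.algebraicIndependent_X (Fin 3) ℂ).map'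
      (f := IsScalarTower.toAlgHom ℂ (MvPolynomial (Fin 3) ℂ) K)
      (IsFractionRing.injective _ _)
    convert h using 1
    funext i; fin_cases i <;> simp [hx, hy, hz]
  have hx0 : x ≠ 0 := by simpa using h0.ne_zero 0
  have hy0 : y ≠ 0 := by simpa using h0.ne_zero 1
  have hz0 : z ≠ 0 := by simpa using h0.ne_zero 2
  -- step 1 : (x*y, y, z)
  have h1 : AlgebraicIndependent ℂ ![x * y, y, z] := by
    have h := tri_mul 1 h0; rwa [pow_one] at h
  -- (y^(2m+1), x*y, z)
  have h3 : AlgebraicIndependent ℂ ![y ^ (2 * m + 1), x * y, z] :=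
    tri_pow (2 * m + 1) (by omega) (tri_swap01 h1)
  -- ((x*y)⁻¹, y^(2m+1), z) then B = y^(m+1) * (x^m)⁻¹
  have h6 : AlgebraicIndependent ℂ ![y ^ (2 * m + 1), (x * y)⁻¹, z] :=
    tri_swap01 (tri_inv (tri_swap01 h3))
  have h8 : AlgebraicIndependent ℂ ![y ^ (m + 1) * (x ^ m)⁻¹, (x * y)⁻¹, z] := by
    have h := tri_mul m h6
    have e : y ^ (2 * m + 1) * ((x * y)⁻¹) ^ m = y ^ (m + 1) * (x ^ m)⁻¹ := by
      rw [mul_inv, mul_pow, inv_pow, inv_pow]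
      field_simp; ring
    rwa [e] at h
  have h10 : AlgebraicIndependent ℂ ![x * y, y ^ (m + 1) * (x ^ m)⁻¹, z] := by
    have h := tri_inv (tri_swap01 h8)
    rwa [inv_inv] at h
  have h13 : AlgebraicIndependent ℂ
      ![x * y, (y ^ (m + 1) * (x ^ m)⁻¹)⁻¹, z] :=
    tri_swap01 (tri_inv (tri_swap01 h10))
  have h14 : AlgebraicIndependent ℂ
      ![x ^ (m + 1) * (y ^ m)⁻¹, (y ^ (m + 1) * (x ^ m)⁻¹)⁻¹, z] := by
    have h := tri_mul 1 h13
    have e : x * y * ((y ^ (m + 1) * (x ^ m)⁻¹)⁻¹) ^ 1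
        = x ^ (m + 1) * (y ^ m)⁻¹ := by
      field_simp; ring
    rwa [e] at h
  have h17 : AlgebraicIndependent ℂ
      ![x ^ (m + 1) * (y ^ m)⁻¹, y ^ (m + 1) * (x ^ m)⁻¹, z] := by
    have h := tri_inv (tri_swap01 h14)
    rw [inv_inv] at h
    exact tri_swap01 h
  -- now divide first two by z
  have h20 : AlgebraicIndependent ℂ
      ![z⁻¹, x ^ (m + 1) * (y ^ m)⁻¹, y ^ (m + 1) * (x ^ m)⁻¹] :=
    tri_inv (tri_swap01 (tri_swap12 h17))
  have h22 : AlgebraicIndependent ℂ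
      ![x ^ (m + 1) * (y ^ m)⁻¹ * z⁻¹, z⁻¹, y ^ (m + 1) * (x ^ m)⁻¹] := by
    have h := tri_mul 1 (tri_swap01 h20)
    rwa [pow_one] at h
  have h26 : AlgebraicIndependent ℂ
      ![y ^ (m + 1) * (x ^ m)⁻¹ * z⁻¹, z⁻¹, x ^ (m + 1) * (y ^ m)⁻¹ * z⁻¹] := by
    have h := tri_mul 1 (tri_swap12 (tri_swap01 (tri_swap12 h22)))
    rwa [pow_one] at h
  have h31 : AlgebraicIndependent ℂ
      ![x ^ (m + 1) * (y ^ m)⁻¹ * z⁻¹, y ^ (m + 1) * (x ^ m)⁻¹ * z⁻¹, z] := by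
    have h := tri_inv (tri_swap01 h26)
    rw [inv_inv] at h
    exact tri_swap01 (tri_swap12 (tri_swap01 h))
  have h32 : AlgebraicIndependent ℂ
      ![x ^ (m + 1) / (y ^ m * z), y ^ (m + 1) / (x ^ m * z), z] := by
    have e1 : x ^ (m + 1) / (y ^ m * z) = x ^ (m + 1) * (y ^ m)⁻¹ * z⁻¹ := by
      rw [div_eq_mul_inv, mul_inv, mul_assoc]
    have e2 : y ^ (m + 1) / (x ^ m * z) = y ^ (m + 1) * (x ^ m)⁻¹ * z⁻¹ := by
      rw [div_eq_mul_inv, mul_inv, mul_assoc]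
    rw [e1, e2]; exact h31
  have hxm : (x ^ m : K) ≠ 0 := pow_ne_zero _ hx0
  have hym : (y ^ m : K) ≠ 0 := pow_ne_zero _ hy0
  -- the final polynomial change of variables
  set F : Fin 3 → MvPolynomial (Fin 3) ℂ :=
    ![(X 2 : MvPolynomial (Fin 3) ℂ) ^ 2,
      C (2⁻¹ : ℂ) * (X 0 + X 1) * X 2,
      C (2⁻¹ : ℂ) * (X 1 - X 0)] with hFdef
  have hF : AlgebraicIndependent ℂ F := by
    have hzxy : AlgebraicIndependent ℂ ![z ^ 2, x, y] :=
      tri_pow 2 (by omega) (tri_swap01 (tri_swap12 h0))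
    apply AlgebraicIndependent.of_aeval (x := ![x * z⁻¹ - y, x * z⁻¹ + y, z])
    have e : (fun i => aeval ![x * z⁻¹ - y, x * z⁻¹ + y, z] (F i)) = ![z ^ 2, x, y] := by
      have e0 : (aeval ![x * z⁻¹ - y, x * z⁻¹ + y, z])
          ((X 2 : MvPolynomial (Fin 3) ℂ) ^ 2) = z ^ 2 := by simp
      have e1 : (aeval ![x * z⁻¹ - y, x * z⁻¹ + y, z])
          (C (2⁻¹ : ℂ) * (X 0 + X 1) * X 2) = x := by
        simp only [map_mul, map_add, map_sub, aeval_X, aeval_C]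
        rw [map_inv₀, map_ofNat]
        simp only [Matrix.cons_val_zero, Matrix.cons_val_one, Matrix.head_cons,
          Matrix.cons_val_two, Matrix.tail_cons]
        field_simp
        ring
      have e2 : (aeval ![x * z⁻¹ - y, x * z⁻¹ + y, z])
          (C (2⁻¹ : ℂ) * (X 1 - X 0)) = y := by
        simp only [map_mul, map_add, map_sub, aeval_X, aeval_C]
        rw [map_inv₀, map_ofNat]
        simp only [Matrix.cons_val_zero, Matrix.cons_val_one, Matrix.head_cons,
          Matrix.cons_val_two, Matrix.tail_cons]
        field_simp
        ring
      funext i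
      fin_cases i
      · simpa [hFdef] using e0
      · simpa [hFdef] using e1
      · simpa [hFdef] using e2
    rw [e]; exact hzxy
  have hfinal := h32.aeval_of_algebraicIndependent hF
  have g0 : (aeval ![x ^ (m + 1) / (y ^ m * z), y ^ (m + 1) / (x ^ m * z), z])
      ((X 2 : MvPolynomial (Fin 3) ℂ) ^ 2) = z ^ 2 := by simp
  have g1 : (aeval ![x ^ (m + 1) / (y ^ m * z), y ^ (m + 1) / (x ^ m * z), z])
      (C (2⁻¹ : ℂ) * (X 0 + X 1) * X 2)
      = (x ^ (2 * m + 1) + y ^ (2 * m + 1)) / (2 * x ^ m * y ^ m) := by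
    simp only [map_mul, map_add, map_sub, aeval_X, aeval_C]
    rw [map_inv₀, map_ofNat]
    simp only [Matrix.cons_val_zero, Matrix.cons_val_one, Matrix.head_cons,
      Matrix.cons_val_two, Matrix.tail_cons]
    rw [div_add_div _ _ (mul_ne_zero hym hz0) (mul_ne_zero hxm hz0), inv_mul_eq_div,
      div_mul_eq_mul_div, div_mul_eq_mul_div, div_div, div_eq_div_iff
        (by simp [hx0, hy0, hz0]) (by simp [hx0, hy0])]
    ring
  have g2 : (aeval ![x ^ (m + 1) / (y ^ m * z), y ^ (m + 1) / (x ^ m * z), z])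
      (C (2⁻¹ : ℂ) * (X 1 - X 0))
      = -(x ^ (2 * m + 1) - y ^ (2 * m + 1)) / (2 * x ^ m * y ^ m * z) := by
    simp only [map_mul, map_add, map_sub, aeval_X, aeval_C]
    rw [map_inv₀, map_ofNat]
    simp only [Matrix.cons_val_zero, Matrix.cons_val_one, Matrix.head_cons,
      Matrix.cons_val_two, Matrix.tail_cons]
    rw [div_sub_div _ _ (mul_ne_zero hxm hz0) (mul_ne_zero hym hz0), inv_mul_eq_div,
      div_div, div_eq_div_iff
        (by simp [hx0, hy0, hz0]) (by simp [hx0, hy0, hz0])]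
    ring
  have e : (fun i => aeval ![x ^ (m + 1) / (y ^ m * z), y ^ (m + 1) / (x ^ m * z), z] (F i))
      = ![z ^ 2, (x ^ (2 * m + 1) + y ^ (2 * m + 1)) / (2 * x ^ m * y ^ m),
          -(x ^ (2 * m + 1) - y ^ (2 * m + 1)) / (2 * x ^ m * y ^ m * z)] := by
    funext i
    fin_cases i
    · simpa [hFdef] using g0
    · simpa [hFdef] using g1
    · simpa [hFdef] using g2
  exact e ▸ hfinal
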